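/- A set S ⊆ E × ℝ₊₊ is convex if and only if its radial set transformation ΓS is convex. -/

import Mathlib

open Set
open scoped ENNReal RealInnerProductSpace

noncomputable section

variable {E : Type*} [NormedAddCommGroup E] [InnerProductSpace ℝ E] [FiniteDimensional ℝ E]

/-- The radial point transformation `Γ(x,u) = (x/u, 1/u)`. -/
def radialPoint (p : E × ℝ) : E × ℝ := (p.2⁻¹ • p.1, p.2⁻¹)

/-- The radial set transformation `ΓS = {Γ(x,u) : (x,u) ∈ S}`. -/
def radialSet (S : Set (E × ℝ)) : Set (E × ℝ) := radialPoint '' S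

lemma radialPoint_involutive (p : E × ℝ) (hp : 0 < p.2) :
    radialPoint (radialPoint p) = p := by
  simp [radialPoint, inv_inv, smul_smul, mul_inv_cancel₀ hp.ne']

lemma radialSet_pos (S : Set (E × ℝ)) (hS : ∀ p ∈ S, 0 < p.2) :
    ∀ p ∈ radialSet S, 0 < p.2 := by
  rintro p ⟨q, hq, rfl⟩
  exact inv_pos.mpr (hS q hq)

lemma radialSet_radialSet (S : Set (E × ℝ)) (hS : ∀ p ∈ S, 0 < p.2) :
    radialSet (radialSet S) = S := by
  ext p
  constructor
  · rintro ⟨q, ⟨r, hr, rfl⟩, rfl⟩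
    rwa [radialPoint_involutive r (hS r hr)]
  · intro hp
    exact ⟨radialPoint p, ⟨p, hp, rfl⟩, radialPoint_involutive p (hS p hp)⟩

lemma convex_radialSet (S : Set (E × ℝ)) (hS : ∀ p ∈ S, 0 < p.2)
    (hc : Convex ℝ S) : Convex ℝ (radialSet S) := by
  rintro _ ⟨⟨x, u⟩, hp, rfl⟩ _ ⟨⟨y, v⟩, hq, rfl⟩ a b ha hb hab
  have hu : 0 < u := hS _ hp
  have hv : 0 < v := hS _ hq
  have hd : 0 < a * v + b * u := by
    rcases ha.lt_or_eq with h | h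
    · positivity
    · have hb1 : b = 1 := by linarith
      simp [← h, hb1]; linarith
  set d := a * v + b * u with hdef
  refine ⟨(a * v / d) • (x, u) + (b * u / d) • (y, v),
    hc hp hq (by positivity) (by positivity) ?_, ?_⟩
  · field_simp; exact hdef.symm
  · have h2 : (a * v / d) * u + (b * u / d) * v = u * v / d := by
      field_simp
      linear_combination hab
    simp only [radialPoint, Prod.smul_mk, Prod.mk_add_mk, smul_eq_mul]
    rw [h2]
    refine Prod.ext ?_ ?_
    · show (u * v / d)⁻¹ • ((a * v / d) • x + (b * u / d) • y)
        = a • u⁻¹ • x + b • v⁻¹ • y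
      rw [smul_add, smul_smul, smul_smul, smul_smul, smul_smul]
      congr 1 <;> congr 1 <;> field_simp <;> try ring
    · show (u * v / d)⁻¹ = a * u⁻¹ + b * v⁻¹
      rw [hdef]
      field_simp

/-- A set `S ⊆ E × ℝ₊₊` is convex if and only if `ΓS` is convex. -/
theorem radialSet_convex_iff (S : Set (E × ℝ)) (hS : ∀ p ∈ S, 0 < p.2) :
    Convex ℝ S ↔ Convex ℝ (radialSet S) := by
  constructor
  · exact convex_radialSet S hS
  · intro h
    have := convex_radialSet (radialSet S) (radialSet_pos S hS) h
    rwa [radialSet_radialSet S hS] at this
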